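/- Let ĝ = (g⊕h, [·,·]_{(l,r,ω)}) be a non-abelian extension of a Leibniz algebra g by h satisfying Z(h) = Z(ĝ) ∩ h. Then f₀(x) = (l_x, r_x), f₁ = 0, f₂(x,y) = ω(x,y) defines a Leibniz 2-algebra morphism from g (as a trivial 2-algebra 0 → g) to the strict Leibniz 2-algebra (h, Ξ(h), (ad^L, ad^R), l₂). Conversely, any such morphism (f₀, f₁, f₂) yields a non-abelian extension (g⊕h, [·,·]_{(l,r,ω)}) with Z(h) = Z(ĝ) ∩ h, where l_x = Pr_L f₀(x), r_x = Pr_R f₀(x), ω = f₂. -/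
import Mathlib


variable {K : Type*} [Field K]
  {g : Type*} [AddCommGroup g] [Module K g]
  {h : Type*} [AddCommGroup h] [Module K h]

/-- The extension bracket on `g ⊕ h` determined by `(l, r, ω)`. -/
def extBracket (Bg : g →ₗ[K] g →ₗ[K] g) (Bh : h →ₗ[K] h →ₗ[K] h)
    (l r : g →ₗ[K] Module.End K h) (ω : g →ₗ[K] g →ₗ[K] h)
    (u v : g × h) : g × h :=
  (Bg u.1 v.1, ω u.1 v.1 + l u.1 v.2 + r v.1 u.2 + Bh u.2 v.2)

/-- Membership in `Ξ(h)`. -/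
def InXi (Bh : h →ₗ[K] h →ₗ[K] h) (DL DR : Module.End K h) : Prop :=
  (∀ a b : h, DL (Bh a b) = Bh (DL a) b + Bh a (DL b)) ∧
  (∀ a b : h, DR (Bh a b) = Bh a (DR b) - Bh b (DR a)) ∧
  (∀ α β : h, Bh (DL α + DR α) β = 0) ∧
  (∀ α : h, (∀ β : h, Bh α β = 0) → DR α = 0)

/-- Theorem 3.13: `(g ⊕ h, [·,·]_{(l,r,ω)})` is a non-abelian extension of `g`
by `h` with `Z(h) = Z(ĝ) ∩ h` if and only if `f₀(x) = (l_x, r_x)`, `f₁ = 0`,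
`f₂ = ω` is a Leibniz 2-algebra morphism from `g` to the strict Leibniz
2-algebra `(h, Ξ(h), (ad^L, ad^R), l₂)`: namely `f₀` takes values in `Ξ(h)`,
`l₂(f₀ x, f₀ y) - f₀ [x,y]_g = (ad^L, ad^R)(f₂(x,y))`, and `f₂` satisfies the
morphism coherence identity (with `l₃ = 0` on both sides). -/
theorem extension_with_center_condition_iff_morphism
    (Bg : g →ₗ[K] g →ₗ[K] g)
    (hg : ∀ x y z : g, Bg x (Bg y z) = Bg (Bg x y) z + Bg y (Bg x z))
    (Bh : h →ₗ[K] h →ₗ[K] h)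
    (hh : ∀ a b c : h, Bh a (Bh b c) = Bh (Bh a b) c + Bh b (Bh a c))
    (l r : g →ₗ[K] Module.End K h) (ω : g →ₗ[K] g →ₗ[K] h) :
    -- extension side: the bracket is Leibniz and Z(h) = Z(ĝ) ∩ h
    ((∀ u v w : g × h,
        extBracket Bg Bh l r ω u (extBracket Bg Bh l r ω v w) =
          extBracket Bg Bh l r ω (extBracket Bg Bh l r ω u v) w +
            extBracket Bg Bh l r ω v (extBracket Bg Bh l r ω u w)) ∧
     (∀ α : h, (∀ β : h, Bh α β = 0) ↔
        (∀ v : g × h, extBracket Bg Bh l r ω ((0 : g), α) v = 0)))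
    ↔
    -- morphism side
    ((∀ x : g, InXi Bh (l x) (r x)) ∧
     (∀ (x y : g) (α : h),
        l x (l y α) - l y (l x α) - l (Bg x y) α = Bh (ω x y) α) ∧
     (∀ (x y : g) (α : h),
        l x (r y α) - r y (l x α) - r (Bg x y) α = Bh α (ω x y)) ∧
     (∀ x y z : g,
        l x (ω y z) - l y (ω x z) - r z (ω x y) =
          ω (Bg x y) z - ω x (Bg y z) + ω y (Bg x z))) := by
  constructor
  · rintro ⟨HL, HC⟩
    refine ⟨fun x => ⟨?_, ?_, ?_, ?_⟩, ?_, ?_, ?_⟩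
    · -- l x is a left derivation
      intro a b
      have e := congrArg Prod.snd (HL (x, 0) ((0 : g), a) ((0 : g), b))
      simp only [extBracket, Prod.mk_add_mk, map_zero, LinearMap.zero_apply,
        zero_add, add_zero] at e
      linear_combination (norm := module) e
    · -- r x condition
      intro a b
      have e := congrArg Prod.snd (HL ((0 : g), a) ((0 : g), b) (x, 0))
      simp only [extBracket, Prod.mk_add_mk, map_zero, LinearMap.zero_apply,
        zero_add, add_zero] at e
      linear_combination (norm := module) -e
    · -- l x α + r x α is in the left center
      intro α β
      have e1 := congrArg Prod.snd (HL (x, 0) ((0 : g), α) ((0 : g), β))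
      have e2 := congrArg Prod.snd (HL ((0 : g), α) (x, 0) ((0 : g), β))
      simp only [extBracket, Prod.mk_add_mk, map_zero, LinearMap.zero_apply,
        zero_add, add_zero] at e1 e2
      rw [map_add, LinearMap.add_apply]
      linear_combination (norm := module) -e1 - e2
    · -- r x vanishes on the left center
      intro α hα
      have e := congrArg Prod.snd ((HC α).mp hα (x, 0))
      simpa [extBracket] using e
    · -- condition on l
      intro x y α
      have e := congrArg Prod.snd (HL (x, 0) (y, 0) ((0 : g), α))
      simp only [extBracket, Prod.mk_add_mk, map_zero, LinearMap.zero_apply,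
        zero_add, add_zero] at e
      linear_combination (norm := module) e
    · -- condition on r
      intro x y α
      have e := congrArg Prod.snd (HL (x, 0) ((0 : g), α) (y, 0))
      simp only [extBracket, Prod.mk_add_mk, map_zero, LinearMap.zero_apply,
        zero_add, add_zero] at e
      linear_combination (norm := module) e
    · -- coherence for ω
      intro x y z
      have e := congrArg Prod.snd (HL (x, 0) (y, 0) (z, 0))
      simp only [extBracket, Prod.mk_add_mk, map_zero, LinearMap.zero_apply,
        zero_add, add_zero] at e
      linear_combination (norm := module) e
  · rintro ⟨hXi, c2, c3, c4⟩
    have hderL : ∀ (x : g) (a b : h), l x (Bh a b) = Bh (l x a) b + Bh a (l x b) :=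
      fun x => (hXi x).1
    have hderR : ∀ (x : g) (a b : h), r x (Bh a b) = Bh a (r x b) - Bh b (r x a) :=
      fun x => (hXi x).2.1
    have hZ : ∀ (x : g) (α β : h), Bh (l x α + r x α) β = 0 :=
      fun x => (hXi x).2.2.1
    have hRZ : ∀ (x : g) (α : h), (∀ β : h, Bh α β = 0) → r x α = 0 :=
      fun x => (hXi x).2.2.2
    constructor
    · rintro ⟨x, a⟩ ⟨y, b⟩ ⟨z, c⟩
      have eZ : Bh (l y a) c + Bh (r y a) c = 0 := by
        have := hZ y a c
        rwa [map_add, LinearMap.add_apply] at this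
      have eR : r z (l y a) + r z (r y a) = 0 := by
        have := hRZ z (l y a + r y a) (hZ y a)
        rwa [map_add] at this
      simp only [extBracket, Prod.mk_add_mk, Prod.mk.injEq, map_add,
        LinearMap.add_apply]
      refine ⟨hg x y z, ?_⟩
      linear_combination (norm := module) c4 x y z + c2 x y c + c3 x z b
        - c3 y z a - eR + hderL x b c - hderL y a c - eZ - hderR z a b + hh a b c
    · intro α
      constructor
      · rintro hα ⟨y, b⟩
        simp [extBracket, hα b, hRZ y α hα, Prod.ext_iff]
      · intro hv β
        have e := congrArg Prod.snd (hv ((0 : g), β))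
        simpa [extBracket] using e
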